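/- (Correctness of the ranking constraints (3.3)–(3.4).) Let N ≥ 1, let π : Fin N → ℝ, let j ∈ {1, …, N}, let t ∈ ℝ, and let c̃ ∈ ℝ satisfy c̃ ≥ (max_n π_n) − (min_n π_n). Then the following are equivalent: (i) there exists h : Fin N → {0, 1} with Σ_n h_n ≥ N + 1 − j and c̃ · (1 − h_n) ≥ π_n − t for every n; (ii) at least N + 1 − j indices n satisfy π_n ≤ t; (iii) t ≥ π↓_j, the j-th largest component of π. -/

import Mathlib

noncomputable def sortDesc {N : ℕ} (v : Fin N → ℝ) : Fin N → ℝ :=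
  fun j => v (Tuple.sort v (Fin.rev j))

lemma part2 {N : ℕ} (hN : 1 ≤ N) (π : Fin N → ℝ) (j : ℕ) (hj1 : 1 ≤ j) (hjN : j ≤ N)
    (t : ℝ) :
    ((N + 1 - j ≤ (Finset.univ.filter (fun n : Fin N => π n ≤ t)).card) ↔
      sortDesc π ⟨j - 1, Nat.lt_of_lt_of_le (Nat.sub_lt hj1 Nat.one_pos) hjN⟩ ≤ t) := by
  set σ := Tuple.sort π with hσ
  have hmono : Monotone (π ∘ σ) := Tuple.monotone_sort π
  have hrev : sortDesc π ⟨j - 1, Nat.lt_of_lt_of_le (Nat.sub_lt hj1 Nat.one_pos) hjN⟩ = π (σ ⟨N - j, by omega⟩) := by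
    have : Fin.rev (⟨j - 1, Nat.lt_of_lt_of_le (Nat.sub_lt hj1 Nat.one_pos) hjN⟩ : Fin N) = ⟨N - j, by omega⟩ := by
      ext; simp [Fin.rev]; omega
    unfold sortDesc
    rw [this]
  rw [hrev]
  constructor
  · intro hcard
    by_contra hlt
    push_neg at hlt
    -- all σ ⟨N-j+i⟩ have π > t
    have key : (j : ℕ) ≤ (Finset.univ.filter (fun n : Fin N => ¬ π n ≤ t)).card := by
      have := Finset.card_le_card_of_injOn (f := fun i : Fin j => σ ⟨N - j + i.val, by omega⟩)
        (s := Finset.univ) (t := Finset.univ.filter (fun n : Fin N => ¬ π n ≤ t))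
        (by
          intro i _
          simp only [Finset.mem_coe, Finset.mem_filter, Finset.mem_univ, true_and, not_le]
          calc t < π (σ ⟨N - j, by omega⟩) := hlt
            _ ≤ π (σ ⟨N - j + i.val, by omega⟩) := hmono (by simp [Fin.le_def]))
        (by
          intro a _ b _ hab
          have := σ.injective hab
          simp only [Fin.mk.injEq] at this
          exact Fin.ext (by omega))
      simpa using this
    have hsplit := Finset.card_filter_add_card_filter_not
      (s := Finset.univ) (p := fun n : Fin N => π n ≤ t)
    simp only [Finset.card_univ, Fintype.card_fin] at hsplit
    omega
  · intro ht
    have := Finset.card_le_card_of_injOn (f := fun i : Fin (N + 1 - j) => σ ⟨i.val, by omega⟩)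
      (s := Finset.univ) (t := Finset.univ.filter (fun n : Fin N => π n ≤ t))
      (by
        intro i _
        simp only [Finset.mem_coe, Finset.mem_filter, Finset.mem_univ, true_and]
        calc π (σ ⟨i.val, by omega⟩) ≤ π (σ ⟨N - j, by omega⟩) :=
              hmono (by simp [Fin.le_def]; omega)
          _ ≤ t := ht)
      (by
        intro a _ b _ hab
        have := σ.injective hab
        simp only [Fin.mk.injEq] at this
        exact Fin.ext this)
    simpa using this

theorem ranking_constraints_correct
    {N : ℕ} (hN : 1 ≤ N) (π : Fin N → ℝ) (j : ℕ) (hj1 : 1 ≤ j) (hjN : j ≤ N)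
    (t : ℝ) (c : ℝ)
    (hc : Finset.univ.sup' (Finset.univ_nonempty_iff.mpr ⟨⟨0, hN⟩⟩) π -
        Finset.univ.inf' (Finset.univ_nonempty_iff.mpr ⟨⟨0, hN⟩⟩) π ≤ c) :
    ((∃ h : Fin N → ℝ, (∀ n, h n = 0 ∨ h n = 1) ∧
        ((N : ℝ) + 1 - j ≤ ∑ n, h n) ∧ ∀ n, π n - t ≤ c * (1 - h n)) ↔
      N + 1 - j ≤ (Finset.univ.filter (fun n : Fin N => π n ≤ t)).card) ∧
    ((N + 1 - j ≤ (Finset.univ.filter (fun n : Fin N => π n ≤ t)).card) ↔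
      sortDesc π ⟨j - 1, by omega⟩ ≤ t) := by
  have hne : (Finset.univ : Finset (Fin N)).Nonempty := Finset.univ_nonempty_iff.mpr ⟨⟨0, hN⟩⟩
  refine ⟨?_, part2 hN π j hj1 hjN t⟩
  constructor
  · rintro ⟨h, hb, hsum, hcon⟩
    set S := Finset.univ.filter (fun n : Fin N => h n = 1) with hS
    have hsum' : ∑ n, h n = (S.card : ℝ) := by
      rw [hS, ← Finset.sum_filter_add_sum_filter_not Finset.univ (fun n => h n = 1)]
      have h1 : ∑ n ∈ Finset.univ.filter (fun n => h n = 1), h n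
          = (Finset.univ.filter (fun n : Fin N => h n = 1)).card := by
        rw [Finset.sum_congr rfl (fun n hn => (Finset.mem_filter.mp hn).2)]
        simp
      have h0 : ∑ n ∈ Finset.univ.filter (fun n => ¬ h n = 1), h n = 0 := by
        apply Finset.sum_eq_zero
        intro n hn
        rcases hb n with h' | h'
        · exact h'
        · exact absurd h' (Finset.mem_filter.mp hn).2
      rw [h1, h0, add_zero]
    have hsub : S ⊆ Finset.univ.filter (fun n : Fin N => π n ≤ t) := by
      intro n hn
      have h1 := (Finset.mem_filter.mp hn).2
      have := hcon n
      rw [h1] at this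
      simp only [sub_self, mul_zero] at this
      simp only [Finset.mem_filter, Finset.mem_univ, true_and]
      linarith
    have hcard := Finset.card_le_card hsub
    rw [hsum'] at hsum
    have : (N : ℝ) + 1 - j ≤ ((Finset.univ.filter (fun n : Fin N => π n ≤ t)).card : ℝ) := by
      calc (N : ℝ) + 1 - j ≤ (S.card : ℝ) := hsum
        _ ≤ _ := by exact_mod_cast hcard
    have hNj : ((N + 1 - j : ℕ) : ℝ) = (N : ℝ) + 1 - j := by
      push_cast [Nat.cast_sub (by omega : j ≤ N + 1)]; ring
    exact_mod_cast hNj ▸ this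
  · intro hcard
    refine ⟨fun n => if π n ≤ t then 1 else 0, fun n => by by_cases h : π n ≤ t <;> simp [h], ?_, ?_⟩
    · have : ∑ n, (if π n ≤ t then (1:ℝ) else 0)
          = ((Finset.univ.filter (fun n : Fin N => π n ≤ t)).card : ℝ) := by
        simp [Finset.sum_ite, Finset.sum_const]
      rw [this]
      have hNj : ((N + 1 - j : ℕ) : ℝ) = (N : ℝ) + 1 - j := by
        push_cast [Nat.cast_sub (by omega : j ≤ N + 1)]; ring
      calc (N:ℝ) + 1 - j = ((N + 1 - j : ℕ) : ℝ) := hNj.symm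
        _ ≤ _ := by exact_mod_cast hcard
    · intro n
      by_cases h : π n ≤ t
      · simp only [if_pos h, sub_self, mul_zero]; linarith
      · simp only [h, if_neg, ite_false, sub_zero, mul_one]
        -- need π n - t ≤ c
        have hnonempty : (Finset.univ.filter (fun n : Fin N => π n ≤ t)).Nonempty := by
          rw [← Finset.card_pos]; omega
        obtain ⟨m, hm⟩ := hnonempty
        have hmt : π m ≤ t := (Finset.mem_filter.mp hm).2
        have h1 : π n ≤ Finset.univ.sup' hne π := Finset.le_sup' π (Finset.mem_univ n)
        have h2 : Finset.univ.inf' hne π ≤ π m := Finset.inf'_le π (Finset.mem_univ m)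
        linarith
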